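/- The companion matrix of the polynomial x³ − x² − x − 1 over F₃ cannot be written as D + M with D diagonalizable and M² = 0. -/

import Mathlib

open Matrix

def IsDiagonalizable {F n : Type*} [Field F] [Fintype n] [DecidableEq n]
    (D : Matrix n n F) : Prop :=
  ∃ U : Matrix n n F, IsUnit U ∧ (U⁻¹ * D * U).IsDiag

lemma cube_of_diagonalizable (D : Matrix (Fin 3) (Fin 3) (ZMod 3))
    (h : IsDiagonalizable D) : D ^ 3 = D := by
  haveI : Fact (Nat.Prime 3) := ⟨by norm_num⟩
  obtain ⟨U, hU, hdiag⟩ := h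
  have hdet : IsUnit U.det := (Matrix.isUnit_iff_isUnit_det U).mp hU
  have cancel : ∀ X : Matrix (Fin 3) (Fin 3) (ZMod 3), U⁻¹ * (U * X) = X :=
    fun X => Matrix.nonsing_inv_mul_cancel_left U X hdet
  set B := U⁻¹ * D * U with hB
  have hBdiag : Matrix.diagonal (fun i => B i i) = B := hdiag.diagonal_diag
  have hpow : (fun i => B i i) ^ 3 = fun i => B i i := by
    funext j
    simp only [Pi.pow_apply]
    exact ZMod.pow_card (p := 3) _
  have hB3 : B ^ 3 = B := by
    rw [← hBdiag, Matrix.diagonal_pow, hpow]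
  have hD : D = U * B * U⁻¹ := by
    rw [hB]
    calc D = (U * U⁻¹) * D * (U * U⁻¹) := by
            rw [Matrix.mul_nonsing_inv U hdet]; simp
      _ = U * (U⁻¹ * D * U) * U⁻¹ := by simp only [Matrix.mul_assoc]
  have hconj : (U * B * U⁻¹) ^ 3 = U * B ^ 3 * U⁻¹ := by
    rw [pow_succ, pow_succ, pow_one, pow_succ, pow_succ, pow_one]
    simp only [Matrix.mul_assoc, cancel]
  rw [hD, hconj, hB3]

set_option maxRecDepth 100000 in
set_option maxHeartbeats 4000000 in
lemma key : ∀ a b c d e f g h i : ZMod 3,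
    ¬ ((c*g + b*d + a^2 = 0) ∧
      (c*h + b*e + a*b = 0) ∧
      (c*i + b*f + a*c = 0) ∧
      (f*g + d*e + a*d = 0) ∧
      (f*h + e^2 + b*d = 0) ∧
      (f*i + e*f + c*d = 0) ∧
      (g*i + d*h + a*g = 0) ∧
      (h*i + e*h + b*g = 0) ∧
      (i^2 + f*h + c*g = 0) ∧
      (1 - 1*h - 1*g + g*i - 1*d + d*h - 1*c + c*h + c*g - 1*c*g*i + c*d - 1*c*d*h + b*g - 1*b*f*g + b*e - 1*b*d*e + a + 2*a*g - 2*a*c*g + 2*a*b - 2*a*b*d - 1*a^3 = 0) ∧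
      (1 - 1*i - 1*h + h*i - 1*e + e*h - 1*c + c*i + c*h - 1*c*h*i + c*e - 1*c*e*h + b*h + b*g + b*f - 1*b*f*h - 1*b*e^2 - 1*b*c*g + b^2 - 1*b^2*d - 1*a + a*h + a*c - 1*a*c*h - 1*a*b*e - 1*a^2*b = 0) ∧
      (1 - 2*i + i^2 - 1*h - 1*g - 1*f + f*h - 1*c + 2*c*i - 1*c*i^2 + c*h + 2*c*g + c*f - 1*c*f*h - 1*c^2*g - 2*b + b*i + b*f - 1*b*f*i + b*e - 1*b*e*f + b*d + b*c - 1*b*c*d - 1*a + a*i + a*c - 1*a*c*i + a*b - 1*a*b*f + a^2 - 1*a^2*c = 0) ∧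
      (-1*h - 2*g + g*i - 1*f + f*h + f*g - 1*f*g*i + e*g - 1*e*f*g + e^2 + d*h + d*g + d*f - 1*d*f*h - 1*d*e^2 + c*g - 1*c*d*g - 1*b + 2*b*d - 1*b*d^2 + a*g - 1*a*f*g + a*e - 1*a*d*e + a^2 - 1*a^2*d = 0) ∧
      (2 - 1*i - 2*h + h*i - 1*f + f*i + f*h - 1*f*h*i - 1*e + 2*e*h + 2*e*f - 2*e*f*h - 1*e^3 - 1*d + d*h - 1*c + c*h + c*d - 1*c*d*h + b*g - 1*b*f*g + 2*b*e - 2*b*d*e + a*b - 1*a*b*d = 0) ∧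
      (2 - 3*i + i^2 - 1*h - 1*g - 2*f + 2*f*i - 1*f*i^2 + 2*f*h + f*g + f^2 - 1*f^2*h - 2*e + e*i + e*f - 1*e*f*i + e^2 - 1*e^2*f - 1*d + d*i + d*e - 1*c + c*i + c*g - 1*c*f*g + c*e + c*d - 1*c*d*i - 1*c*d*e - 1*b + b*f + b*d - 1*b*d*f - 1*a + a*d + a*c - 1*a*c*d = 0) ∧
      (1 - 1*i - 1*h + h*i - 1*g + 2*g*i - 1*g*i^2 + g*h + g^2 + f*g - 1*f*g*h - 1*e + e*h - 1*d + d*i + d*h - 1*d*h*i + d*e - 1*d*e*h - 1*c*g^2 + b*g - 1*b*d*g - 1*a + a*h + a*g - 1*a*g*i + a*d - 1*a*d*h - 1*a^2*g = 0) ∧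
      (1 - 2*i + i^2 - 2*h + 2*h*i - 1*h*i^2 + h^2 - 1*g + g*h - 1*f + 2*f*h - 1*f*h^2 - 1*e + e*i + e*h - 1*e*h*i + e^2 - 1*e^2*h + c*g - 1*c*g*h - 1*b + b*h + b*g - 1*b*g*i - 1*b*e*g + b*d - 1*b*d*h - 1*a*b*g = 0) ∧
      (3 - 4*i + 3*i^2 - 1*i^3 - 3*h + 2*h*i - 2*g + 2*g*i - 2*f + 2*f*i + 2*f*h - 2*f*h*i - 1*e + e*h + e*f - 1*e*f*h - 1*d + d*h - 1*c + c*h + 2*c*g - 2*c*g*i + c*d - 1*c*d*h + b*g - 1*b*f*g + a*g - 1*a*c*g = 0)) := by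
  decide

/-- The companion matrix of x³ - x² - x - 1 over 𝔽₃ is not a sum of a
diagonalizable matrix and a square-zero matrix. -/
theorem stmt_11 :
    ¬ ∃ D M : Matrix (Fin 3) (Fin 3) (ZMod 3),
        IsDiagonalizable D ∧ M ^ 2 = 0 ∧
        (!![0, 0, 1; 1, 0, 1; 0, 1, 1] : Matrix (Fin 3) (Fin 3) (ZMod 3)) = D + M := by
  rintro ⟨D, M, hDdiag, hM, hA⟩
  have hD3 : D ^ 3 = D := cube_of_diagonalizable D hDdiag
  have hDval : D = (!![0, 0, 1; 1, 0, 1; 0, 1, 1] : Matrix (Fin 3) (Fin 3) (ZMod 3)) - M := by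
    rw [hA]; abel
  have h2 : M * M = 0 := by rw [← pow_two]; exact hM
  have h3 : D * D * D = D := by
    rw [pow_succ, pow_succ, pow_one] at hD3; exact hD3
  rw [hDval] at h3
  have e00 : (M * M) 0 0 = (0 : Matrix (Fin 3) (Fin 3) (ZMod 3)) 0 0 := by rw [h2]
  simp only [Matrix.mul_apply, Fin.sum_univ_three, Matrix.zero_apply] at e00
  have e01 : (M * M) 0 1 = (0 : Matrix (Fin 3) (Fin 3) (ZMod 3)) 0 1 := by rw [h2]
  simp only [Matrix.mul_apply, Fin.sum_univ_three, Matrix.zero_apply] at e01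
  have e02 : (M * M) 0 2 = (0 : Matrix (Fin 3) (Fin 3) (ZMod 3)) 0 2 := by rw [h2]
  simp only [Matrix.mul_apply, Fin.sum_univ_three, Matrix.zero_apply] at e02
  have e10 : (M * M) 1 0 = (0 : Matrix (Fin 3) (Fin 3) (ZMod 3)) 1 0 := by rw [h2]
  simp only [Matrix.mul_apply, Fin.sum_univ_three, Matrix.zero_apply] at e10
  have e11 : (M * M) 1 1 = (0 : Matrix (Fin 3) (Fin 3) (ZMod 3)) 1 1 := by rw [h2]
  simp only [Matrix.mul_apply, Fin.sum_univ_three, Matrix.zero_apply] at e11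
  have e12 : (M * M) 1 2 = (0 : Matrix (Fin 3) (Fin 3) (ZMod 3)) 1 2 := by rw [h2]
  simp only [Matrix.mul_apply, Fin.sum_univ_three, Matrix.zero_apply] at e12
  have e20 : (M * M) 2 0 = (0 : Matrix (Fin 3) (Fin 3) (ZMod 3)) 2 0 := by rw [h2]
  simp only [Matrix.mul_apply, Fin.sum_univ_three, Matrix.zero_apply] at e20
  have e21 : (M * M) 2 1 = (0 : Matrix (Fin 3) (Fin 3) (ZMod 3)) 2 1 := by rw [h2]
  simp only [Matrix.mul_apply, Fin.sum_univ_three, Matrix.zero_apply] at e21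
  have e22 : (M * M) 2 2 = (0 : Matrix (Fin 3) (Fin 3) (ZMod 3)) 2 2 := by rw [h2]
  simp only [Matrix.mul_apply, Fin.sum_univ_three, Matrix.zero_apply] at e22
  have f00 := congrFun (congrFun h3 0) 0
  norm_num [Matrix.mul_apply, Matrix.sub_apply, Fin.sum_univ_three, Matrix.vecHead, Matrix.vecTail, Matrix.cons_val_two, Matrix.cons_val_one, Matrix.cons_val_zero] at f00
  have f01 := congrFun (congrFun h3 0) 1
  norm_num [Matrix.mul_apply, Matrix.sub_apply, Fin.sum_univ_three, Matrix.vecHead, Matrix.vecTail, Matrix.cons_val_two, Matrix.cons_val_one, Matrix.cons_val_zero] at f01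
  have f02 := congrFun (congrFun h3 0) 2
  norm_num [Matrix.mul_apply, Matrix.sub_apply, Fin.sum_univ_three, Matrix.vecHead, Matrix.vecTail, Matrix.cons_val_two, Matrix.cons_val_one, Matrix.cons_val_zero] at f02
  have f10 := congrFun (congrFun h3 1) 0
  norm_num [Matrix.mul_apply, Matrix.sub_apply, Fin.sum_univ_three, Matrix.vecHead, Matrix.vecTail, Matrix.cons_val_two, Matrix.cons_val_one, Matrix.cons_val_zero] at f10
  have f11 := congrFun (congrFun h3 1) 1
  norm_num [Matrix.mul_apply, Matrix.sub_apply, Fin.sum_univ_three, Matrix.vecHead, Matrix.vecTail, Matrix.cons_val_two, Matrix.cons_val_one, Matrix.cons_val_zero] at f11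
  have f12 := congrFun (congrFun h3 1) 2
  norm_num [Matrix.mul_apply, Matrix.sub_apply, Fin.sum_univ_three, Matrix.vecHead, Matrix.vecTail, Matrix.cons_val_two, Matrix.cons_val_one, Matrix.cons_val_zero] at f12
  have f20 := congrFun (congrFun h3 2) 0
  norm_num [Matrix.mul_apply, Matrix.sub_apply, Fin.sum_univ_three, Matrix.vecHead, Matrix.vecTail, Matrix.cons_val_two, Matrix.cons_val_one, Matrix.cons_val_zero] at f20
  have f21 := congrFun (congrFun h3 2) 1
  norm_num [Matrix.mul_apply, Matrix.sub_apply, Fin.sum_univ_three, Matrix.vecHead, Matrix.vecTail, Matrix.cons_val_two, Matrix.cons_val_one, Matrix.cons_val_zero] at f21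
  have f22 := congrFun (congrFun h3 2) 2
  norm_num [Matrix.mul_apply, Matrix.sub_apply, Fin.sum_univ_three, Matrix.vecHead, Matrix.vecTail, Matrix.cons_val_two, Matrix.cons_val_one, Matrix.cons_val_zero] at f22
  exact key (M 0 0) (M 0 1) (M 0 2) (M 1 0) (M 1 1) (M 1 2) (M 2 0) (M 2 1) (M 2 2) ⟨by linear_combination (exp := 1) e00,
    by linear_combination (exp := 1) e01,
    by linear_combination (exp := 1) e02,
    by linear_combination (exp := 1) e10,
    by linear_combination (exp := 1) e11,
    by linear_combination (exp := 1) e12,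
    by linear_combination (exp := 1) e20,
    by linear_combination (exp := 1) e21,
    by linear_combination (exp := 1) e22,
    by linear_combination (exp := 1) f00,
    by linear_combination (exp := 1) f01,
    by linear_combination (exp := 1) f02,
    by linear_combination (exp := 1) f10,
    by linear_combination (exp := 1) f11,
    by linear_combination (exp := 1) f12,
    by linear_combination (exp := 1) f20,
    by linear_combination (exp := 1) f21,
    by linear_combination (exp := 1) f22⟩
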